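/- Let f : 𝔽₂^n → 𝔽₂ be any Boolean function and define ω = ∑_{a ∈ 𝔽₂^n} W_f(a)^4, where W_f(a) = ∑_{x∈𝔽₂^n} (−1)^{f(x)+⟨x,a⟩} is the Walsh transform. Then the number of 2-dimensional affine subspaces A of 𝔽₂^n with ∑_{x∈A} f(x) ≠ 0 equals (2^{4n} − ω)/(3·2^{n+4}). -/

import Mathlib

/-- Sum of a function over a (finite) set of points. -/
noncomputable def setSum {α β : Type*} [Fintype α] [AddCommMonoid β]
    (S : Set α) (F : α → β) : β :=
  ∑ x ∈ (Set.toFinite S).toFinset, F x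

/-- `A` is a `k`-dimensional affine subspace (a `k`-flat) of `𝔽₂ⁿ`. -/
def IsFlat (n k : ℕ) (A : Set (Fin n → ZMod 2)) : Prop :=
  ∃ (U : Submodule (ZMod 2) (Fin n → ZMod 2)) (a : Fin n → ZMod 2),
    Module.finrank (ZMod 2) U = k ∧ A = (fun x => x + a) '' (U : Set (Fin n → ZMod 2))

/-- The Walsh transform of a Boolean function `f : 𝔽₂ⁿ → 𝔽₂`. -/
def walsh (n : ℕ) (f : (Fin n → ZMod 2) → ZMod 2) (a : Fin n → ZMod 2) : ℤ :=
  ∑ x : Fin n → ZMod 2, (-1 : ℤ) ^ (f x + ∑ i, x i * a i).val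

namespace Stmt18

open Finset Function

def chi (b : ZMod 2) : ℤ := (-1) ^ b.val

lemma chi_add (b c : ZMod 2) : chi (b + c) = chi b * chi c := by revert b c; decide

lemma chi_eq (b : ZMod 2) : chi b = if b = 0 then 1 else -1 := by revert b; decide

lemma chi_sum {ι : Type*} (s : Finset ι) (g : ι → ZMod 2) :
    chi (∑ i ∈ s, g i) = ∏ i ∈ s, chi (g i) := by
  classical
  induction s using Finset.induction with
  | empty => simp [chi]
  | insert a s h ih => rw [Finset.sum_insert h, Finset.prod_insert h, chi_add, ih]

variable {n : ℕ}

lemma add_self (x : Fin n → ZMod 2) : x + x = 0 := by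
  funext j
  have : ∀ b : ZMod 2, b + b = 0 := by decide
  exact this _

lemma add_eq_zero_iff {x y : Fin n → ZMod 2} : x + y = 0 ↔ x = y := by
  constructor
  · intro h
    have := congrArg (· + y) h
    simpa [add_assoc, add_self] using this
  · rintro rfl; exact add_self x

lemma compl_pair {x y z w : Fin n → ZMod 2} (h : x + y + z + w = 0) (hxy : x = y) :
    z = w := by
  subst hxy
  rw [add_self, zero_add] at h
  exact add_eq_zero_iff.mp h

/-- Orthogonality of characters. -/
lemma orth (s : Fin n → ZMod 2) :
    ∑ a : Fin n → ZMod 2, chi (∑ i, s i * a i) = if s = 0 then 2 ^ n else 0 := by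
  simp_rw [chi_sum]
  have key := Finset.prod_univ_sum (fun _ : Fin n => (univ : Finset (ZMod 2)))
    (fun i b => chi (s i * b))
  rw [Fintype.piFinset_univ] at key
  rw [← key]
  have h2 : ∀ c : ZMod 2, ∑ b : ZMod 2, chi (c * b) = if c = 0 then 2 else 0 := by decide
  simp_rw [h2]
  by_cases hs : s = 0
  · subst hs; simp
  · rw [if_neg hs]
    obtain ⟨i, hi⟩ := Function.ne_iff.mp hs
    exact Finset.prod_eq_zero (mem_univ i) (by simp [show s i ≠ 0 by simpa using hi])

def walshC (f : (Fin n → ZMod 2) → ZMod 2) (a : Fin n → ZMod 2) : ℤ :=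
  ∑ x : Fin n → ZMod 2, chi (f x + ∑ i, x i * a i)

lemma walsh_eq (f : (Fin n → ZMod 2) → ZMod 2) (a : Fin n → ZMod 2) :
    walsh n f a = walshC f a := rfl

/-- The sum-zero quadruples. -/
def S4 (n : ℕ) : Finset (Fin 4 → (Fin n → ZMod 2)) :=
  univ.filter (fun q => ∑ i, q i = 0)

lemma omega_eq (f : (Fin n → ZMod 2) → ZMod 2) :
    ∑ a : Fin n → ZMod 2, (walsh n f a) ^ 4
      = 2 ^ n * ∑ q ∈ S4 n, chi (∑ i, f (q i)) := by
  have expand : ∀ a : Fin n → ZMod 2, (walsh n f a) ^ 4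
      = ∑ q : Fin 4 → (Fin n → ZMod 2),
          chi ((∑ i, f (q i)) + ∑ j, (∑ i, q i) j * a j) := by
    intro a
    have h1 : walsh n f a = ∑ x : Fin n → ZMod 2, chi (f x + ∑ j, x j * a j) := rfl
    rw [h1, show (∑ x : Fin n → ZMod 2, chi (f x + ∑ j, x j * a j)) ^ 4
        = ∏ _i : Fin 4, ∑ x : Fin n → ZMod 2, chi (f x + ∑ j, x j * a j) by
      simp [Finset.prod_const]]
    have key := Finset.prod_univ_sum (fun _ : Fin 4 => (univ : Finset (Fin n → ZMod 2)))
      (fun _i x => chi (f x + ∑ j, x j * a j))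
    rw [Fintype.piFinset_univ] at key
    rw [key]
    refine Finset.sum_congr rfl fun q _ => ?_
    rw [← chi_sum]
    congr 1
    rw [Finset.sum_add_distrib]
    congr 1
    rw [Finset.sum_comm]
    refine Finset.sum_congr rfl fun j _ => ?_
    rw [Finset.sum_apply, Finset.sum_mul]
  simp_rw [expand]
  rw [Finset.sum_comm]
  have horth : ∀ q : Fin 4 → (Fin n → ZMod 2),
      ∑ a : Fin n → ZMod 2, chi ((∑ i, f (q i)) + ∑ j, (∑ i, q i) j * a j)
        = chi (∑ i, f (q i)) * (if (∑ i, q i) = 0 then 2 ^ n else 0) := by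
    intro q
    simp_rw [chi_add, ← Finset.mul_sum]
    rw [orth]
  simp_rw [horth]
  simp_rw [mul_ite, mul_zero]
  rw [← Finset.sum_filter]
  rw [S4, ← Finset.sum_mul, mul_comm]

def quad (g : Fin 3 → (Fin n → ZMod 2)) : Fin 4 → (Fin n → ZMod 2) :=
  ![g 0, g 1, g 2, g 0 + g 1 + g 2]

lemma quad_inj : Function.Injective (quad (n := n)) := by
  intro g g' h
  funext j
  fin_cases j
  · simpa [quad] using congrFun h 0
  · simpa [quad] using congrFun h 1
  · simpa [quad] using congrFun h 2

lemma S4_eq_image : S4 n = univ.image quad := by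
  ext q
  simp only [S4, mem_filter, mem_univ, true_and, mem_image]
  constructor
  · intro h
    refine ⟨![q 0, q 1, q 2], ?_⟩
    rw [Fin.sum_univ_four] at h
    funext i
    fin_cases i <;> simp [quad]
    exact add_eq_zero_iff.mp h
  · rintro ⟨g, rfl⟩
    rw [Fin.sum_univ_four]
    show (g 0 + g 1 + g 2) + (g 0 + g 1 + g 2) = 0
    exact add_self _

lemma card_S4 : (S4 n).card = 2 ^ (3 * n) := by
  rw [S4_eq_image, Finset.card_image_of_injective _ quad_inj, card_univ]
  rw [show Fintype.card (Fin 3 → (Fin n → ZMod 2)) = ((2:ℕ) ^ n) ^ 3 by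
    simp [Fintype.card_fun]]
  rw [← pow_mul, Nat.mul_comm]

set_option maxHeartbeats 1600000 in
lemma inj_of_ne (f : (Fin n → ZMod 2) → ZMod 2) {q : Fin 4 → (Fin n → ZMod 2)} :
    (∑ i, q i = 0) → (∑ i, f (q i) ≠ 0) → Function.Injective q := by
  intro h0 hne i j hij
  by_contra hne'
  apply hne
  rw [Fin.sum_univ_four] at h0
  have z1 : ∀ a b : ZMod 2, a + a + b + b = 0 := by decide
  have z2 : ∀ a b : ZMod 2, a + b + a + b = 0 := by decide
  have z3 : ∀ a b : ZMod 2, a + b + b + a = 0 := by decide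
  fin_cases i <;> fin_cases j
  all_goals
    first
    | exact absurd rfl hne'
    | ((try norm_num at hij);
       (try simp only [show ((⟨0, by norm_num⟩ : Fin 4)) = 0 from rfl,
          show ((⟨1, by norm_num⟩ : Fin 4)) = 1 from rfl,
          show ((⟨2, by norm_num⟩ : Fin 4)) = 2 from rfl,
          show ((⟨3, by norm_num⟩ : Fin 4)) = 3 from rfl] at hij);
       have h' : q 0 + q 1 + q 2 + q 3 = 0 := by (rw [← h0]; try abel);
       have h2 := compl_pair h' hij;
       rw [Fin.sum_univ_four, hij, h2];
       first
       | exact z1 _ _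
       | exact z2 _ _
       | exact z3 _ _)
    | ((try norm_num at hij);
       (try simp only [show ((⟨0, by norm_num⟩ : Fin 4)) = 0 from rfl,
          show ((⟨1, by norm_num⟩ : Fin 4)) = 1 from rfl,
          show ((⟨2, by norm_num⟩ : Fin 4)) = 2 from rfl,
          show ((⟨3, by norm_num⟩ : Fin 4)) = 3 from rfl] at hij);
       have h' : q 0 + q 2 + q 1 + q 3 = 0 := by (rw [← h0]; try abel);
       have h2 := compl_pair h' hij;
       rw [Fin.sum_univ_four, hij, h2];
       first
       | exact z1 _ _
       | exact z2 _ _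
       | exact z3 _ _)
    | ((try norm_num at hij);
       (try simp only [show ((⟨0, by norm_num⟩ : Fin 4)) = 0 from rfl,
          show ((⟨1, by norm_num⟩ : Fin 4)) = 1 from rfl,
          show ((⟨2, by norm_num⟩ : Fin 4)) = 2 from rfl,
          show ((⟨3, by norm_num⟩ : Fin 4)) = 3 from rfl] at hij);
       have h' : q 0 + q 3 + q 1 + q 2 = 0 := by (rw [← h0]; try abel);
       have h2 := compl_pair h' hij;
       rw [Fin.sum_univ_four, hij, h2];
       first
       | exact z1 _ _
       | exact z2 _ _
       | exact z3 _ _)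
    | ((try norm_num at hij);
       (try simp only [show ((⟨0, by norm_num⟩ : Fin 4)) = 0 from rfl,
          show ((⟨1, by norm_num⟩ : Fin 4)) = 1 from rfl,
          show ((⟨2, by norm_num⟩ : Fin 4)) = 2 from rfl,
          show ((⟨3, by norm_num⟩ : Fin 4)) = 3 from rfl] at hij);
       have h' : q 1 + q 0 + q 2 + q 3 = 0 := by (rw [← h0]; try abel);
       have h2 := compl_pair h' hij;
       rw [Fin.sum_univ_four, hij, h2];
       first
       | exact z1 _ _
       | exact z2 _ _
       | exact z3 _ _)
    | ((try norm_num at hij);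
       (try simp only [show ((⟨0, by norm_num⟩ : Fin 4)) = 0 from rfl,
          show ((⟨1, by norm_num⟩ : Fin 4)) = 1 from rfl,
          show ((⟨2, by norm_num⟩ : Fin 4)) = 2 from rfl,
          show ((⟨3, by norm_num⟩ : Fin 4)) = 3 from rfl] at hij);
       have h' : q 1 + q 2 + q 0 + q 3 = 0 := by (rw [← h0]; try abel);
       have h2 := compl_pair h' hij;
       rw [Fin.sum_univ_four, hij, h2];
       first
       | exact z1 _ _
       | exact z2 _ _
       | exact z3 _ _)
    | ((try norm_num at hij);
       (try simp only [show ((⟨0, by norm_num⟩ : Fin 4)) = 0 from rfl,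
          show ((⟨1, by norm_num⟩ : Fin 4)) = 1 from rfl,
          show ((⟨2, by norm_num⟩ : Fin 4)) = 2 from rfl,
          show ((⟨3, by norm_num⟩ : Fin 4)) = 3 from rfl] at hij);
       have h' : q 1 + q 3 + q 0 + q 2 = 0 := by (rw [← h0]; try abel);
       have h2 := compl_pair h' hij;
       rw [Fin.sum_univ_four, hij, h2];
       first
       | exact z1 _ _
       | exact z2 _ _
       | exact z3 _ _)
    | ((try norm_num at hij);
       (try simp only [show ((⟨0, by norm_num⟩ : Fin 4)) = 0 from rfl,
          show ((⟨1, by norm_num⟩ : Fin 4)) = 1 from rfl,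
          show ((⟨2, by norm_num⟩ : Fin 4)) = 2 from rfl,
          show ((⟨3, by norm_num⟩ : Fin 4)) = 3 from rfl] at hij);
       have h' : q 2 + q 0 + q 1 + q 3 = 0 := by (rw [← h0]; try abel);
       have h2 := compl_pair h' hij;
       rw [Fin.sum_univ_four, hij, h2];
       first
       | exact z1 _ _
       | exact z2 _ _
       | exact z3 _ _)
    | ((try norm_num at hij);
       (try simp only [show ((⟨0, by norm_num⟩ : Fin 4)) = 0 from rfl,
          show ((⟨1, by norm_num⟩ : Fin 4)) = 1 from rfl,
          show ((⟨2, by norm_num⟩ : Fin 4)) = 2 from rfl,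
          show ((⟨3, by norm_num⟩ : Fin 4)) = 3 from rfl] at hij);
       have h' : q 2 + q 1 + q 0 + q 3 = 0 := by (rw [← h0]; try abel);
       have h2 := compl_pair h' hij;
       rw [Fin.sum_univ_four, hij, h2];
       first
       | exact z1 _ _
       | exact z2 _ _
       | exact z3 _ _)
    | ((try norm_num at hij);
       (try simp only [show ((⟨0, by norm_num⟩ : Fin 4)) = 0 from rfl,
          show ((⟨1, by norm_num⟩ : Fin 4)) = 1 from rfl,
          show ((⟨2, by norm_num⟩ : Fin 4)) = 2 from rfl,
          show ((⟨3, by norm_num⟩ : Fin 4)) = 3 from rfl] at hij);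
       have h' : q 2 + q 3 + q 0 + q 1 = 0 := by (rw [← h0]; try abel);
       have h2 := compl_pair h' hij;
       rw [Fin.sum_univ_four, hij, h2];
       first
       | exact z1 _ _
       | exact z2 _ _
       | exact z3 _ _)
    | ((try norm_num at hij);
       (try simp only [show ((⟨0, by norm_num⟩ : Fin 4)) = 0 from rfl,
          show ((⟨1, by norm_num⟩ : Fin 4)) = 1 from rfl,
          show ((⟨2, by norm_num⟩ : Fin 4)) = 2 from rfl,
          show ((⟨3, by norm_num⟩ : Fin 4)) = 3 from rfl] at hij);
       have h' : q 3 + q 0 + q 1 + q 2 = 0 := by (rw [← h0]; try abel);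
       have h2 := compl_pair h' hij;
       rw [Fin.sum_univ_four, hij, h2];
       first
       | exact z1 _ _
       | exact z2 _ _
       | exact z3 _ _)
    | ((try norm_num at hij);
       (try simp only [show ((⟨0, by norm_num⟩ : Fin 4)) = 0 from rfl,
          show ((⟨1, by norm_num⟩ : Fin 4)) = 1 from rfl,
          show ((⟨2, by norm_num⟩ : Fin 4)) = 2 from rfl,
          show ((⟨3, by norm_num⟩ : Fin 4)) = 3 from rfl] at hij);
       have h' : q 3 + q 1 + q 0 + q 2 = 0 := by (rw [← h0]; try abel);
       have h2 := compl_pair h' hij;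
       rw [Fin.sum_univ_four, hij, h2];
       first
       | exact z1 _ _
       | exact z2 _ _
       | exact z3 _ _)
    | ((try norm_num at hij);
       (try simp only [show ((⟨0, by norm_num⟩ : Fin 4)) = 0 from rfl,
          show ((⟨1, by norm_num⟩ : Fin 4)) = 1 from rfl,
          show ((⟨2, by norm_num⟩ : Fin 4)) = 2 from rfl,
          show ((⟨3, by norm_num⟩ : Fin 4)) = 3 from rfl] at hij);
       have h' : q 3 + q 2 + q 0 + q 1 = 0 := by (rw [← h0]; try abel);
       have h2 := compl_pair h' hij;
       rw [Fin.sum_univ_four, hij, h2];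
       first
       | exact z1 _ _
       | exact z2 _ _
       | exact z3 _ _)

lemma range4 (w x y z : Fin n → ZMod 2) : Set.range ![w,x,y,z] = {w,x,y,z} := by
  ext u; simp [Matrix.range_cons, Matrix.range_empty]; tauto

lemma range2 (w x : Fin n → ZMod 2) : Set.range ![w,x] = {w,x} := by
  ext u; simp [Matrix.range_cons, Matrix.range_empty]; tauto

lemma inj4 {w x y z : Fin n → ZMod 2} (h1 : w≠x) (h2 : w≠y) (h3 : w≠z) (h4 : x≠y)
    (h5 : x≠z) (h6 : y≠z) : Function.Injective ![w,x,y,z] := by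
  intro i j hij; fin_cases i <;> fin_cases j <;> simp_all

lemma span_pair_set (u v : Fin n → ZMod 2) :
    (Submodule.span (ZMod 2) {u, v} : Set (Fin n → ZMod 2)) = {0, u, v, u + v} := by
  ext x
  simp only [SetLike.mem_coe, Submodule.mem_span_pair, Set.mem_insert_iff,
    Set.mem_singleton_iff]
  constructor
  · rintro ⟨s, t, rfl⟩
    have hz : ∀ c : ZMod 2, c = 0 ∨ c = 1 := by decide
    rcases hz s with rfl | rfl <;> rcases hz t with rfl | rfl <;> simp
  · rintro (rfl | rfl | rfl | rfl)
    exacts [⟨0, 0, by simp⟩, ⟨1, 0, by simp⟩, ⟨0, 1, by simp⟩, ⟨1, 1, by simp⟩]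

lemma image_flat (u v a : Fin n → ZMod 2) :
    (fun x => x + a) '' (Submodule.span (ZMod 2) {u, v} : Set (Fin n → ZMod 2))
      = {a, u + a, v + a, u + v + a} := by
  rw [span_pair_set, Set.image_insert_eq, Set.image_insert_eq, Set.image_insert_eq,
    Set.image_singleton]
  simp only [zero_add]

lemma flat_of_inj {q : Fin 4 → (Fin n → ZMod 2)} (hq : Function.Injective q)
    (h0 : ∑ i, q i = 0) : IsFlat n 2 (Set.range q) := by
  have h01 : q 0 ≠ q 1 := fun h => absurd (hq h) (by decide)
  have h02 : q 0 ≠ q 2 := fun h => absurd (hq h) (by decide)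
  have h12 : q 1 ≠ q 2 := fun h => absurd (hq h) (by decide)
  refine ⟨Submodule.span (ZMod 2) {q 0 + q 1, q 0 + q 2}, q 0, ?_, ?_⟩
  · have li : LinearIndependent (ZMod 2) ![q 0 + q 1, q 0 + q 2] := by
      rw [LinearIndependent.pair_iff]
      intro s t hst
      have hz : ∀ c : ZMod 2, c = 0 ∨ c = 1 := by decide
      rcases hz s with rfl | rfl <;> rcases hz t with rfl | rfl
      · exact ⟨rfl, rfl⟩
      · exfalso; simp only [zero_smul, one_smul, zero_add] at hst
        exact h02 (add_eq_zero_iff.mp hst)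
      · exfalso; simp only [zero_smul, one_smul, add_zero] at hst
        exact h01 (add_eq_zero_iff.mp hst)
      · exfalso; simp only [one_smul] at hst
        exact h12 (add_left_cancel (add_eq_zero_iff.mp hst))
    have hfr := finrank_span_eq_card li
    rw [range2] at hfr
    rw [hfr]; rfl
  · rw [image_flat]
    have hr : Set.range q = {q 0, q 1, q 2, q 3} := by
      ext x; constructor
      · rintro ⟨i, rfl⟩; fin_cases i <;> simp
      · rintro (rfl | rfl | rfl | rfl) <;> exact Set.mem_range_self _
    rw [hr]
    have e1 : q 0 + q 1 + q 0 = q 1 := by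
      funext j; simp only [Pi.add_apply]
      exact (by decide : ∀ a b : ZMod 2, a + b + a = b) _ _
    have e2 : q 0 + q 2 + q 0 = q 2 := by
      funext j; simp only [Pi.add_apply]
      exact (by decide : ∀ a b : ZMod 2, a + b + a = b) _ _
    have e3 : q 0 + q 1 + (q 0 + q 2) + q 0 = q 3 := by
      have hs : q 0 + q 1 + q 2 = q 3 := by
        rw [Fin.sum_univ_four] at h0; exact add_eq_zero_iff.mp h0
      rw [← hs]; funext j; simp only [Pi.add_apply]
      exact (by decide : ∀ a b c : ZMod 2, a + b + (a + c) + a = a + b + c) _ _ _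
    rw [e1, e2, e3]

lemma inj_of_flat {A : Set (Fin n → ZMod 2)} (hA : IsFlat n 2 A) :
    ∃ q : Fin 4 → (Fin n → ZMod 2), Function.Injective q ∧ (∑ i, q i = 0) ∧
      Set.range q = A := by
  obtain ⟨U, a, hrk, rfl⟩ := hA
  have B := Module.finBasisOfFinrankEq (ZMod 2) U hrk
  have hU : U = Submodule.span (ZMod 2)
      {(B 0 : Fin n → ZMod 2), (B 1 : Fin n → ZMod 2)} := by
    conv_lhs => rw [← Submodule.map_subtype_top U, ← B.span_eq]
    rw [Submodule.map_span, ← Set.range_comp]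
    congr 1
    ext x
    simp [Fin.exists_fin_two, eq_comm]
  set u : Fin n → ZMod 2 := (B 0 : Fin n → ZMod 2) with hu
  set v : Fin n → ZMod 2 := (B 1 : Fin n → ZMod 2) with hv
  have hu0 : u ≠ 0 := by
    simp only [hu, ne_eq, ZeroMemClass.coe_eq_zero]
    exact B.ne_zero 0
  have hv0 : v ≠ 0 := by
    simp only [hv, ne_eq, ZeroMemClass.coe_eq_zero]
    exact B.ne_zero 1
  have huv : u ≠ v := by
    intro h
    have h2 := B.injective (Subtype.coe_injective h)
    exact absurd h2 (by decide)
  have d1 : a ≠ u + a := by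
    intro h; apply hu0
    have h' : 0 + a = u + a := by rw [zero_add]; exact h
    exact (add_right_cancel h').symm
  have d2 : a ≠ v + a := by
    intro h; apply hv0
    have h' : 0 + a = v + a := by rw [zero_add]; exact h
    exact (add_right_cancel h').symm
  have d3 : a ≠ u + v + a := by
    intro h; apply huv
    have h' : 0 + a = u + v + a := by rw [zero_add]; exact h
    exact add_eq_zero_iff.mp (add_right_cancel h').symm
  have d4 : u + a ≠ v + a := fun h => huv (add_right_cancel h)
  have d5 : u + a ≠ u + v + a := by
    intro h
    have h' : u + 0 + a = u + v + a := by rw [add_zero]; exact h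
    exact hv0 (add_left_cancel (add_right_cancel h' : u + 0 = u + v)).symm
  have d6 : v + a ≠ u + v + a := by
    intro h
    have h' : 0 + v + a = u + v + a := by rw [zero_add]; exact h
    exact hu0 (add_right_cancel (add_right_cancel h' : 0 + v = u + v)).symm
  refine ⟨![a, u + a, v + a, u + v + a], inj4 d1 d2 d3 d4 d5 d6, ?_, ?_⟩
  · rw [Fin.sum_univ_four]
    show a + (u + a) + (v + a) + (u + v + a) = 0
    funext j; simp only [Pi.add_apply, Pi.zero_apply]
    exact (by decide : ∀ x y z : ZMod 2, x + (y + x) + (z + x) + (y + z + x) = 0) _ _ _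
  · rw [range4, hU, image_flat]

lemma setSum_range {q : Fin 4 → (Fin n → ZMod 2)} (hq : Function.Injective q)
    (f : (Fin n → ZMod 2) → ZMod 2) : setSum (Set.range q) f = ∑ i, f (q i) := by
  classical
  rw [setSum, show (Set.toFinite (Set.range q)).toFinset = Finset.image q univ from by
    ext x; simp]
  exact Finset.sum_image (fun x _ y _ h => hq h)

/-- The quadruples with nonzero f-sum. -/
def Q1 (n : ℕ) (f : (Fin n → ZMod 2) → ZMod 2) : Finset (Fin 4 → (Fin n → ZMod 2)) :=
  univ.filter (fun q => (∑ i, q i = 0) ∧ ∑ i, f (q i) ≠ 0)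

lemma card_Q1 (f : (Fin n → ZMod 2) → ZMod 2) :
    (Q1 n f).card =
      24 * {A : Set (Fin n → ZMod 2) | IsFlat n 2 A ∧ setSum A f ≠ 0}.ncard := by
  classical
  have hFeq : {A : Set (Fin n → ZMod 2) | IsFlat n 2 A ∧ setSum A f ≠ 0}
      = ↑((Q1 n f).image Set.range) := by
    ext A
    simp only [Set.mem_setOf_eq, Finset.coe_image, Set.mem_image, Finset.mem_coe]
    constructor
    · rintro ⟨hflat, hsum⟩
      obtain ⟨q, hqi, hq0, hqr⟩ := inj_of_flat hflat
      refine ⟨q, Finset.mem_filter.mpr ⟨mem_univ _, hq0, ?_⟩, hqr⟩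
      intro hfz
      apply hsum
      rw [← hqr, setSum_range hqi, hfz]
    · rintro ⟨q, hq, rfl⟩
      obtain ⟨hq0, hqs⟩ := (Finset.mem_filter.mp hq).2
      have hqi := inj_of_ne f hq0 hqs
      exact ⟨flat_of_inj hqi hq0, by rw [setSum_range hqi]; exact hqs⟩
  rw [hFeq, Set.ncard_coe_finset]
  rw [Finset.card_eq_sum_card_image Set.range (Q1 n f)]
  have h24 : ∀ A ∈ (Q1 n f).image Set.range,
      ((Q1 n f).filter (fun q => Set.range q = A)).card = 24 := by
    intro A hA
    obtain ⟨p, hp, rfl⟩ := Finset.mem_image.mp hA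
    obtain ⟨hp0, hps⟩ := (Finset.mem_filter.mp hp).2
    have hpi := inj_of_ne f hp0 hps
    have key : (Q1 n f).filter (fun q => Set.range q = Set.range p)
        = (univ : Finset (Equiv.Perm (Fin 4))).image (fun σ : Equiv.Perm (Fin 4) => p ∘ ⇑σ) := by
      ext q
      simp only [Finset.mem_filter, Finset.mem_image, Finset.mem_univ, true_and]
      constructor
      · rintro ⟨hq, hr⟩
        obtain ⟨hq0, hqs⟩ := (Finset.mem_filter.mp hq).2
        have hqi := inj_of_ne f hq0 hqs
        have hex : ∀ i, ∃ j, p j = q i := by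
          intro i
          have hm : q i ∈ Set.range p := hr ▸ Set.mem_range_self i
          exact hm
        choose σ0 hσ0 using hex
        have hσinj : Function.Injective σ0 := by
          intro i j h
          apply hqi
          rw [← hσ0 i, ← hσ0 j, h]
        refine ⟨Equiv.ofBijective σ0 (Finite.injective_iff_bijective.mp hσinj), ?_⟩
        funext i
        exact hσ0 i
      · rintro ⟨σ, rfl⟩
        refine ⟨Finset.mem_filter.mpr ⟨mem_univ _, ?_, ?_⟩, ?_⟩
        · rw [show ∑ i, (p ∘ ⇑σ) i = ∑ i, p i from Equiv.sum_comp σ p]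
          exact hp0
        · rw [show ∑ i, f ((p ∘ ⇑σ) i) = ∑ i, f (p i)
            from Equiv.sum_comp σ (fun i => f (p i))]
          exact hps
        · rw [Set.range_comp, Equiv.range_eq_univ, Set.image_univ]
    rw [key, Finset.card_image_of_injective _ ?_, Finset.card_univ, Fintype.card_perm]
    · rfl
    · intro σ τ h
      ext i
      exact congrArg Fin.val (hpi (congrFun h i))
  rw [Finset.sum_congr rfl h24, Finset.sum_const, smul_eq_mul, mul_comm]

end Stmt18

open Stmt18 in
theorem stmt_18 (n : ℕ) (f : (Fin n → ZMod 2) → ZMod 2) :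
    (Set.ncard {A : Set (Fin n → ZMod 2) | IsFlat n 2 A ∧ setSum A f ≠ 0} : ℚ) =
      ((2 : ℚ) ^ (4 * n) - (∑ a : Fin n → ZMod 2, (walsh n f a) ^ 4 : ℤ)) /
        (3 * 2 ^ (n + 4)) := by
  classical
  have hsplit : ∑ q ∈ S4 n, chi (∑ i, f (q i))
      = ((S4 n).card : ℤ) - 2 * ((Q1 n f).card : ℤ) := by
    rw [← Finset.sum_filter_add_sum_filter_not (S4 n) (fun q => ∑ i, f (q i) = 0)]
    have hQ : (S4 n).filter (fun q => ¬ ∑ i, f (q i) = 0) = Q1 n f := by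
      rw [S4, Q1, Finset.filter_filter]
    have hc := Finset.card_filter_add_card_filter_not
      (s := S4 n) (p := fun q => ∑ i, f (q i) = 0)
    rw [hQ] at hc
    have e0 : ∑ q ∈ (S4 n).filter (fun q => ∑ i, f (q i) = 0), chi (∑ i, f (q i))
        = (((S4 n).filter (fun q => ∑ i, f (q i) = 0)).card : ℤ) := by
      have h1 : ∀ q ∈ (S4 n).filter (fun q => ∑ i, f (q i) = 0),
          chi (∑ i, f (q i)) = 1 := by
        intro q hq
        rw [(Finset.mem_filter.mp hq).2]
        rfl
      rw [Finset.sum_congr rfl h1, Finset.sum_const, nsmul_eq_mul, mul_one]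
    have e1 : ∑ q ∈ (S4 n).filter (fun q => ¬ ∑ i, f (q i) = 0), chi (∑ i, f (q i))
        = -(((Q1 n f).card : ℤ)) := by
      have h1 : ∀ q ∈ (S4 n).filter (fun q => ¬ ∑ i, f (q i) = 0),
          chi (∑ i, f (q i)) = -1 := by
        intro q hq
        rw [chi_eq, if_neg (Finset.mem_filter.mp hq).2]
      rw [Finset.sum_congr rfl h1, Finset.sum_const, nsmul_eq_mul, mul_neg_one, hQ]
    rw [e0, e1]
    push_cast [← hc]
    ring
  have hω : (∑ a : Fin n → ZMod 2, (walsh n f a) ^ 4 : ℤ)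
      = 2 ^ n * ((2 ^ (3 * n) : ℤ)
          - 2 * (24 * ({A : Set (Fin n → ZMod 2) |
              IsFlat n 2 A ∧ setSum A f ≠ 0}.ncard : ℤ))) := by
    rw [omega_eq, hsplit, card_S4, card_Q1]
    push_cast
    ring
  rw [eq_div_iff (by positivity)]
  rw [hω]
  push_cast
  have hp : (2:ℚ) ^ (4 * n) = 2 ^ n * 2 ^ (3 * n) := by
    rw [show 4 * n = n + 3 * n by ring, pow_add]
  have hq : (2:ℚ) ^ (n + 4) = 2 ^ n * 16 := by
    rw [pow_add]
    norm_num
  rw [hp, hq]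
  ring
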